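/- Let q ≥ 2, let G be a finite connected (q+1)-regular graph, and let ψ : V → ℝ be a real eigenfunction of A with eigenvalue λ ∈ (−2√q, 2√q); write λ = 2√q cos(s ln q) with s ∈ ℝ and set ε = q^{−1/2−is}, f(e) = ψ(t(e)) − εψ(o(e)), f*(e) = ψ(o(e)) − εψ(t(e)). Given a ∈ ℂ^V, let K' ∈ H₁ be defined by K'(x,y) = a(x) for every directed edge (x,y), so that K̂'_B is the multiplication operator by a(o(e)) on ℓ²(B). Then ⟨f*, K̂'_B f⟩_{ℓ²(B)} = conj(ε)·Σ_{x∈V} ((q+1)a(x) − (Aa)(x))·ψ(x)², where (Aa)(x) = Σ_{y~x} a(y). -/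

import Mathlib

open Classical Finset

noncomputable section

def RegularOfDegree {V : Type} [Fintype V] (G : SimpleGraph V) (d : ℕ) : Prop :=
  ∀ x : V, (Finset.univ.filter fun y => G.Adj x y).card = d

/-- `ε = q^{-1/2 - i s}`. -/
def eps (q : ℕ) (s : ℝ) : ℂ :=
  (q : ℂ) ^ (-(1/2 : ℂ) - Complex.I * (s : ℂ))

/-- Lemma 8 (i) of the paper: for `K'(x,y) = a(x)` (so that `K̂'_B` is the multiplication
operator by `a(o(e))` on `ℓ²(B)`),
`⟨f*, K̂'_B f⟩ = conj(ε) ∑_x ((q+1) a(x) - (Aa)(x)) ψ(x)²`. -/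
theorem nb_pairing_formula_multiplication
    (q : ℕ) (hq : 2 ≤ q)
    (V : Type) [Fintype V] (G : SimpleGraph V)
    (hconn : G.Connected) (hreg : RegularOfDegree G (q + 1))
    (ψ : V → ℝ) (lam s : ℝ)
    (heig : ∀ x : V, (∑ y : V, if G.Adj x y then ψ y else 0) = lam * ψ x)
    (hlam₁ : -(2 * Real.sqrt q) < lam) (hlam₂ : lam < 2 * Real.sqrt q)
    (hs : lam = 2 * Real.sqrt q * Real.cos (s * Real.log q))
    (a : V → ℂ) :
    (∑ x : V, ∑ y : V, if G.Adj x y then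
        (starRingEnd ℂ) ((ψ x : ℂ) - eps q s * (ψ y : ℂ)) * a x *
          ((ψ y : ℂ) - eps q s * (ψ x : ℂ))
      else 0)
      = (starRingEnd ℂ) (eps q s) *
          ∑ x : V, (((q : ℂ) + 1) * a x - ∑ y : V, if G.Adj x y then a y else 0) *
            (ψ x : ℂ) ^ 2 := by
  have hq0 : (0:ℝ) < q := by exact_mod_cast (by omega : 0 < q)
  have hqC : (q:ℂ) ≠ 0 := Nat.cast_ne_zero.mpr (by omega)
  set L : ℝ := Real.log q with hLdef
  set e : ℂ := eps q s with hedef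
  set ec : ℂ := (starRingEnd ℂ) (eps q s) with hecdef
  have he : e = Complex.exp ((-(1/2 : ℂ) - Complex.I * s) * (L : ℂ)) := by
    rw [hedef, eps, Complex.cpow_def_of_ne_zero hqC, ← Complex.natCast_log, mul_comm]
  have hconjz : (starRingEnd ℂ) ((-(1/2 : ℂ) - Complex.I * s) * (L:ℂ)) =
      (-(1/2 : ℂ) + Complex.I * s) * (L:ℂ) := by
    simp only [map_mul, map_sub, map_neg, map_div₀, map_one, map_ofNat, Complex.conj_I,
      Complex.conj_ofReal]
    ring
  have hec : ec = Complex.exp ((-(1/2 : ℂ) + Complex.I * s) * (L : ℂ)) := by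
    rw [hecdef, ← hedef, he, ← Complex.exp_conj, hconjz]
  have hprod : e * ec = ((q:ℂ))⁻¹ := by
    rw [hec, he, ← Complex.exp_add]
    have hexp : (-(1/2 : ℂ) - Complex.I * s) * (L : ℂ) + (-(1/2 : ℂ) + Complex.I * s) * (L : ℂ)
        = ((-L : ℝ) : ℂ) := by push_cast; ring
    rw [hexp, ← Complex.ofReal_exp, Real.exp_neg, Real.exp_log hq0]
    push_cast
    rfl
  have hsum : e + ec = (lam:ℂ)/q := by
    have hexp2 : Real.exp (L/2) = Real.sqrt q := by
      rw [Real.sqrt_eq_rpow, Real.rpow_def_of_pos hq0]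
      congr 1; ring
    have hsqne : Real.sqrt q ≠ 0 := by positivity
    have step1 : e + ec
        = Complex.exp ((( -(L/2) : ℝ)) : ℂ) *
          (Complex.exp (((s*L : ℝ):ℂ) * Complex.I) + Complex.exp (-((s*L:ℝ):ℂ) * Complex.I)) := by
      rw [hec, he, mul_add, ← Complex.exp_add, ← Complex.exp_add]
      rw [add_comm]
      congr 2 <;> push_cast <;> ring
    have hr : (Real.exp (-(L/2))) * (2 * Real.cos (s*L)) = lam / q := by
      rw [hs, Real.exp_neg, hexp2, eq_div_iff hq0.ne']
      field_simp
      linear_combination (-1 : ℝ) * Real.cos (s*L) * (Real.sq_sqrt hq0.le)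
    rw [step1, ← Complex.two_cos, ← Complex.ofReal_exp, ← Complex.ofReal_cos]
    calc ((Real.exp (-(L/2)) : ℝ):ℂ) * (2 * ((Real.cos (s*L) : ℝ):ℂ))
        = (((Real.exp (-(L/2))) * (2 * Real.cos (s*L)) : ℝ) : ℂ) := by push_cast; ring
      _ = ((lam / q : ℝ) : ℂ) := by rw [hr]
      _ = (lam:ℂ)/q := by push_cast; ring
  -- eigenvalue equation over ℂ
  have hψsum : ∀ x : V, (∑ y : V, if G.Adj x y then ((ψ y : ℝ) : ℂ) else 0)
      = (lam : ℂ) * (ψ x : ℂ) := by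
    intro x
    calc (∑ y : V, if G.Adj x y then ((ψ y : ℝ) : ℂ) else 0)
        = ((∑ y : V, if G.Adj x y then ψ y else 0 : ℝ) : ℂ) := by
          push_cast [apply_ite ((↑·) : ℝ → ℂ)]
          rfl
      _ = ((lam * ψ x : ℝ) : ℂ) := by rw [heig x]
      _ = (lam : ℂ) * (ψ x : ℂ) := by push_cast; ring
  have hdeg : ∀ x : V, (∑ y : V, if G.Adj x y then (1:ℂ) else 0) = (q:ℂ) + 1 := by
    intro x
    rw [Finset.sum_boole]
    rw [hreg x]
    push_cast
    ring
  set Q : V → ℂ := fun x => ∑ y : V, if G.Adj x y then ((ψ y : ℂ))^2 else 0 with hQ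
  set A2 : V → ℂ := fun x => ∑ y : V, if G.Adj x y then a y else 0 with hA2
  have hcoef : (1 + e * ec) * (lam:ℂ) - e * ((q:ℂ) + 1) = ec * ((q:ℂ) + 1) := by
    have he2 : e = (lam:ℂ)/q - ec := by linear_combination hsum
    rw [hprod, he2]
    field_simp
    ring
  have hswap : (∑ x : V, a x * Q x) = ∑ x : V, (ψ x : ℂ)^2 * A2 x := by
    simp only [hQ, hA2, Finset.mul_sum, mul_ite, mul_zero]
    rw [Finset.sum_comm]
    refine Finset.sum_congr rfl fun x _ => Finset.sum_congr rfl fun y _ => ?_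
    rw [SimpleGraph.adj_comm]
    simp [mul_comm]
  have hx : ∀ x : V, (∑ y : V, if G.Adj x y then
        (starRingEnd ℂ) ((ψ x : ℂ) - e * (ψ y : ℂ)) * a x *
          ((ψ y : ℂ) - e * (ψ x : ℂ)) else 0)
      = ((1 + e * ec) * (lam:ℂ) - e * ((q:ℂ) + 1)) * (a x * (ψ x : ℂ)^2)
        - ec * (a x * Q x) := by
    intro x
    have expand : ∀ y : V, (if G.Adj x y then
          (starRingEnd ℂ) ((ψ x : ℂ) - e * (ψ y : ℂ)) * a x *
            ((ψ y : ℂ) - e * (ψ x : ℂ)) else 0)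
        = (1 + e * ec) * (a x * (ψ x : ℂ)) * (if G.Adj x y then ((ψ y : ℝ):ℂ) else 0)
          - e * (a x * (ψ x : ℂ)^2) * (if G.Adj x y then (1:ℂ) else 0)
          - ec * (a x) * (if G.Adj x y then ((ψ y : ℂ))^2 else 0) := by
      intro y
      by_cases h : G.Adj x y
      · simp only [if_pos h]
        have hc : (starRingEnd ℂ) ((ψ x : ℂ) - e * (ψ y : ℂ)) = (ψ x : ℂ) - ec * (ψ y : ℂ) := by
          rw [hecdef, ← hedef, map_sub, map_mul, Complex.conj_ofReal, Complex.conj_ofReal]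
        rw [hc]; ring
      · simp [h]
    rw [Finset.sum_congr rfl fun y _ => expand y]
    rw [Finset.sum_sub_distrib, Finset.sum_sub_distrib, ← Finset.mul_sum, ← Finset.mul_sum,
      ← Finset.mul_sum, hψsum x, hdeg x]
    rw [hQ]
    ring
  calc (∑ x : V, ∑ y : V, if G.Adj x y then
        (starRingEnd ℂ) ((ψ x : ℂ) - e * (ψ y : ℂ)) * a x *
          ((ψ y : ℂ) - e * (ψ x : ℂ)) else 0)
      = ∑ x : V, (((1 + e * ec) * (lam:ℂ) - e * ((q:ℂ) + 1)) * (a x * (ψ x : ℂ)^2)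
          - ec * (a x * Q x)) := Finset.sum_congr rfl fun x _ => hx x
    _ = ((1 + e * ec) * (lam:ℂ) - e * ((q:ℂ) + 1)) * (∑ x : V, a x * (ψ x : ℂ)^2)
          - ec * (∑ x : V, a x * Q x) := by
        rw [Finset.sum_sub_distrib, ← Finset.mul_sum, ← Finset.mul_sum]
    _ = ec * ((q:ℂ) + 1) * (∑ x : V, a x * (ψ x : ℂ)^2)
          - ec * (∑ x : V, (ψ x : ℂ)^2 * A2 x) := by rw [hcoef, hswap]
    _ = ec * ∑ x : V, (((q : ℂ) + 1) * a x - A2 x) * (ψ x : ℂ) ^ 2 := by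
        rw [Finset.mul_sum, Finset.mul_sum, Finset.mul_sum, ← Finset.sum_sub_distrib]
        exact Finset.sum_congr rfl fun x _ => by ring
    _ = ec * ∑ x : V, (((q : ℂ) + 1) * a x - ∑ y : V, if G.Adj x y then a y else 0) *
            (ψ x : ℂ) ^ 2 := by simp only [hA2]
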